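/- Let R be a commutative ring. All Pierce stalks of R are projective free rings if and only if for every finitely generated projective R-module P there is a complete orthogonal set of idempotents e₁, …, e_k in R (depending on P) such that for each i the module P/(1−e_i)P is a free module over the ring R/(1−e_i), where (1−e_i) denotes the principal ideal generated by 1−e_i. -/

import Mathlib

/-- A complete orthogonal set of idempotents: finitely many idempotents, pairwise orthogonal,
summing to `1`. -/
def IsCompleteOrthogonalIdempotents {R : Type*} [CommRing R] {k : ℕ} (e : Fin k → R) : Prop :=
  (∀ i, IsIdempotentElem (e i)) ∧ (∀ i j, i ≠ j → e i * e j = 0) ∧ ∑ i, e i = 1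

/-- The ideal of `R` generated by the idempotents of `R` lying in `p`; the Pierce stalk of `R`
at the prime `p` is `R ⧸ pierceIdeal p`. -/
def pierceIdeal {R : Type*} [CommRing R] (p : Ideal R) : Ideal R :=
  Ideal.span {e : R | IsIdempotentElem e ∧ e ∈ p}

universe u

/-- A commutative ring is *projective free* if every finitely generated projective module over
it is free. -/
def IsProjectiveFree (S : Type u) [CommRing S] : Prop :=
  ∀ (M : Type u) [AddCommGroup M] [Module S M],
    Module.Finite S M → Module.Projective S M → Module.Free S M

open TensorProduct

section Engine

variable {R : Type*} [CommRing R] {S : Type*} [CommRing S] [Algebra R S]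

lemma baseChange_toLin'_apply {m n : ℕ} (C : Matrix (Fin m) (Fin n) R)
    (x : S ⊗[R] (Fin n → R)) :
    TensorProduct.piScalarRight R S S (Fin m) ((Matrix.toLin' C).baseChange S x) =
      Matrix.toLin' (C.map (algebraMap R S)) (TensorProduct.piScalarRight R S S (Fin n) x) := by
  induction x with
  | zero => simp
  | add a b ha hb => simp only [map_add, ha, hb]
  | tmul s v =>
      ext i
      simp [Matrix.toLin'_apply, Matrix.mulVec, dotProduct, Finset.mul_sum,
        Algebra.smul_def, TensorProduct.piScalarRightHom_tmul, mul_comm, mul_left_comm]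

variable {P : Type*} [AddCommGroup P] [Module R P]

lemma key_identity {n : ℕ} (ι : P →ₗ[R] (Fin n → R)) (ρ : (Fin n → R) →ₗ[R] P)
    (A : Matrix (Fin n) (Fin n) R) (hA : ι ∘ₗ ρ = Matrix.toLin' A)
    (y : Fin n → S) :
    TensorProduct.piScalarRight R S S (Fin n)
        ((ι.baseChange S) ((ρ.baseChange S) ((TensorProduct.piScalarRight R S S (Fin n)).symm y)))
      = Matrix.toLin' (A.map (algebraMap R S)) y := by
  have h1 : (ι.baseChange S) ((ρ.baseChange S) ((TensorProduct.piScalarRight R S S (Fin n)).symm y))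
      = (Matrix.toLin' A).baseChange S ((TensorProduct.piScalarRight R S S (Fin n)).symm y) := by
    rw [← hA, LinearMap.baseChange_comp]; rfl
  rw [h1, baseChange_toLin'_apply, LinearEquiv.apply_symm_apply]

theorem free_of_matrixPair {n : ℕ} (ι : P →ₗ[R] (Fin n → R)) (ρ : (Fin n → R) →ₗ[R] P)
    (hρι : ρ ∘ₗ ι = LinearMap.id) (A : Matrix (Fin n) (Fin n) R) (hA : ι ∘ₗ ρ = Matrix.toLin' A)
    {a : ℕ} (U : Matrix (Fin n) (Fin a) S) (V : Matrix (Fin a) (Fin n) S)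
    (hVU : V * U = 1) (hUV : U * V = A.map (algebraMap R S)) :
    Module.Free S (S ⊗[R] P) := by
  set εn := TensorProduct.piScalarRight R S S (Fin n) with hεn
  let u : (Fin a → S) →ₗ[S] S ⊗[R] P :=
    (ρ.baseChange S) ∘ₗ (εn.symm.toLinearMap ∘ₗ Matrix.toLin' U)
  let v : (S ⊗[R] P) →ₗ[S] (Fin a → S) :=
    Matrix.toLin' V ∘ₗ (εn.toLinearMap ∘ₗ (ι.baseChange S))
  have hρι' : ∀ z : S ⊗[R] P, (ρ.baseChange S) ((ι.baseChange S) z) = z := by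
    intro z
    rw [← LinearMap.comp_apply, ← LinearMap.baseChange_comp, hρι, LinearMap.baseChange_id,
      LinearMap.id_apply]
  have h1 : v ∘ₗ u = LinearMap.id := by
    refine LinearMap.ext fun y => ?_
    simp only [LinearMap.comp_apply, LinearMap.id_apply, u, v, LinearEquiv.coe_coe, hεn]
    rw [key_identity ι ρ A hA, ← Matrix.toLin'_mul_apply, ← hUV, ← Matrix.toLin'_mul_apply]
    rw [show V * (U * V) * U = (V * U) * (V * U) by simp only [Matrix.mul_assoc], hVU, mul_one,
      Matrix.toLin'_one, LinearMap.id_apply]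
  have h2 : u ∘ₗ v = LinearMap.id := by
    refine LinearMap.ext fun x => ?_
    simp only [LinearMap.comp_apply, LinearMap.id_apply, u, v, LinearEquiv.coe_coe, hεn]
    rw [← Matrix.toLin'_mul_apply, hUV, ← key_identity ι ρ A hA, LinearEquiv.symm_apply_apply,
      LinearEquiv.symm_apply_apply, hρι', hρι']
  exact Module.Free.of_equiv (LinearEquiv.ofLinear u v h2 h1)

theorem matrixPair_of_free {n : ℕ} (ι : P →ₗ[R] (Fin n → R)) (ρ : (Fin n → R) →ₗ[R] P)
    (hρι : ρ ∘ₗ ι = LinearMap.id) (A : Matrix (Fin n) (Fin n) R) (hA : ι ∘ₗ ρ = Matrix.toLin' A)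
    [Module.Finite R P] (hfree : Module.Free S (S ⊗[R] P)) :
    ∃ (a : ℕ) (U : Matrix (Fin n) (Fin a) S) (V : Matrix (Fin a) (Fin n) S),
      V * U = 1 ∧ U * V = A.map (algebraMap R S) := by
  set εn := TensorProduct.piScalarRight R S S (Fin n) with hεn
  have : Module.Finite S (S ⊗[R] P) := inferInstance
  let κ := Module.Free.ChooseBasisIndex S (S ⊗[R] P)
  let b : Module.Basis κ S (S ⊗[R] P) := Module.Free.chooseBasis S (S ⊗[R] P)
  let a : ℕ := Fintype.card κ
  let u : (Fin a → S) ≃ₗ[S] (S ⊗[R] P) := (b.reindex (Fintype.equivFin κ)).equivFun.symm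
  refine ⟨a, LinearMap.toMatrix' (εn.toLinearMap ∘ₗ (ι.baseChange S) ∘ₗ u.toLinearMap),
    LinearMap.toMatrix' (u.symm.toLinearMap ∘ₗ (ρ.baseChange S) ∘ₗ εn.symm.toLinearMap), ?_, ?_⟩
  · rw [← LinearMap.toMatrix'_comp]
    have : (u.symm.toLinearMap ∘ₗ (ρ.baseChange S) ∘ₗ εn.symm.toLinearMap) ∘ₗ
        (εn.toLinearMap ∘ₗ (ι.baseChange S) ∘ₗ u.toLinearMap) = LinearMap.id := by
      refine LinearMap.ext fun y => ?_
      simp only [LinearMap.comp_apply, LinearEquiv.coe_coe, LinearMap.id_apply,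
        LinearEquiv.symm_apply_apply]
      rw [← LinearMap.comp_apply (ρ.baseChange S), ← LinearMap.baseChange_comp, hρι,
        LinearMap.baseChange_id, LinearMap.id_apply, LinearEquiv.symm_apply_apply]
    rw [this, LinearMap.toMatrix'_id]
  · rw [← LinearMap.toMatrix'_comp]
    have : (εn.toLinearMap ∘ₗ (ι.baseChange S) ∘ₗ u.toLinearMap) ∘ₗ
        (u.symm.toLinearMap ∘ₗ (ρ.baseChange S) ∘ₗ εn.symm.toLinearMap)
        = Matrix.toLin' (A.map (algebraMap R S)) := by
      refine LinearMap.ext fun y => ?_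
      simp only [LinearMap.comp_apply, LinearEquiv.coe_coe, LinearEquiv.apply_symm_apply]
      rw [key_identity ι ρ A hA]
    rw [this, LinearMap.toMatrix'_toLin']

noncomputable def quotEquiv (J : Ideal R) :
    ((R ⧸ J) ⊗[R] P) ≃ₗ[R ⧸ J] (P ⧸ (J • ⊤ : Submodule R P)) :=
  (TensorProduct.quotTensorEquivQuotSMul P J).extendScalarsOfSurjective
    (by rw [Ideal.Quotient.algebraMap_eq]; exact Ideal.Quotient.mk_surjective)

lemma free_tensor_iff_free_quot (J : Ideal R) :
    Module.Free (R ⧸ J) ((R ⧸ J) ⊗[R] P) ↔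
      Module.Free (R ⧸ J) (P ⧸ (J • ⊤ : Submodule R P)) :=
  ⟨fun h => Module.Free.of_equiv' h (quotEquiv J),
   fun h => Module.Free.of_equiv' h (quotEquiv (P := P) J).symm⟩

theorem free_quot_of_le {n : ℕ} (ι : P →ₗ[R] (Fin n → R)) (ρ : (Fin n → R) →ₗ[R] P)
    (hρι : ρ ∘ₗ ι = LinearMap.id) (A : Matrix (Fin n) (Fin n) R) (hA : ι ∘ₗ ρ = Matrix.toLin' A)
    [Module.Finite R P] {J₁ J₂ : Ideal R} (h : J₁ ≤ J₂)
    (hfree : Module.Free (R ⧸ J₁) ((R ⧸ J₁) ⊗[R] P)) :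
    Module.Free (R ⧸ J₂) ((R ⧸ J₂) ⊗[R] P) := by
  obtain ⟨a, U, V, hVU, hUV⟩ := matrixPair_of_free ι ρ hρι A hA hfree
  refine free_of_matrixPair ι ρ hρι A hA (U.map (Ideal.Quotient.factor h))
    (V.map (Ideal.Quotient.factor h)) ?_ ?_
  · rw [← Matrix.map_mul, hVU, Matrix.map_one _ (map_zero _) (map_one _)]
  · rw [← Matrix.map_mul, hUV, Matrix.map_map]
    ext i j
    simp [Ideal.Quotient.algebraMap_eq, Ideal.Quotient.factor_mk]

end Engine

section Pierce

variable {R : Type*} [CommRing R]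

lemma idem_mem_pierce {p : Ideal R} {e : R} (he : IsIdempotentElem e) (hep : e ∈ p) :
    e ∈ pierceIdeal p :=
  Ideal.subset_span ⟨he, hep⟩

lemma exists_idem_span (p : Ideal R) {x : R} (hx : x ∈ pierceIdeal p) :
    ∃ e : R, IsIdempotentElem e ∧ e ∈ p ∧ x ∈ Ideal.span {e} := by
  refine Submodule.span_induction ?_ ?_ ?_ ?_ hx
  · exact fun x ⟨h1, h2⟩ => ⟨x, h1, h2, Ideal.mem_span_singleton_self x⟩
  · exact ⟨0, IsIdempotentElem.zero, p.zero_mem, Ideal.zero_mem _⟩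
  · rintro x y - - ⟨e, he, hep, hx⟩ ⟨f, hf, hfp, hy⟩
    refine ⟨e + f - e * f, ?_, ?_, ?_⟩
    · have : IsIdempotentElem ((1 - e) * (1 - f)) :=
        (he.one_sub).mul_of_commute (Commute.all _ _) (hf.one_sub)
      have h2 : e + f - e * f = 1 - (1 - e) * (1 - f) := by ring
      rw [h2]; exact this.one_sub
    · have : e + f - e * f = e + f * (1 - e) := by ring
      rw [this]; exact p.add_mem hep (p.mul_mem_right _ hfp)
    · have hE : e ∈ Ideal.span {e + f - e * f} := by
        rw [Ideal.mem_span_singleton']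
        exact ⟨e, by linear_combination (1 - f) * he.eq⟩
      have hF : f ∈ Ideal.span {e + f - e * f} := by
        rw [Ideal.mem_span_singleton']
        exact ⟨f, by linear_combination (1 - e) * hf.eq⟩
      obtain ⟨r, hr⟩ := Ideal.mem_span_singleton'.mp hx
      obtain ⟨s, hs⟩ := Ideal.mem_span_singleton'.mp hy
      rw [← hr, ← hs]
      exact Ideal.add_mem _ (Ideal.mul_mem_left _ _ hE) (Ideal.mul_mem_left _ _ hF)
  · rintro r x - ⟨e, he, hep, hx⟩
    exact ⟨e, he, hep, Ideal.mul_mem_left _ r hx⟩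

lemma exists_idem_span_finset (p : Ideal R) (s : Finset R) (hs : ∀ x ∈ s, x ∈ pierceIdeal p) :
    ∃ e, IsIdempotentElem e ∧ e ∈ p ∧ ∀ x ∈ s, x ∈ Ideal.span {e} := by
  classical
  induction s using Finset.induction with
  | empty => exact ⟨0, IsIdempotentElem.zero, p.zero_mem, by simp⟩
  | @insert y t hy ih =>
      obtain ⟨e, he, hep, hxe⟩ := ih (fun x hx => hs x (Finset.mem_insert_of_mem hx))
      obtain ⟨f, hf, hfp, hyf⟩ := exists_idem_span p (hs y (Finset.mem_insert_self y t))
      have hgidem : IsIdempotentElem (e + f - e * f) := by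
        have : IsIdempotentElem ((1 - e) * (1 - f)) :=
          (he.one_sub).mul_of_commute (Commute.all _ _) (hf.one_sub)
        have h2 : e + f - e * f = 1 - (1 - e) * (1 - f) := by ring
        rw [h2]; exact this.one_sub
      have hgp : e + f - e * f ∈ p := by
        have : e + f - e * f = e + f * (1 - e) := by ring
        rw [this]; exact p.add_mem hep (p.mul_mem_right _ hfp)
      have hE : Ideal.span {e} ≤ Ideal.span ({e + f - e * f} : Set R) := by
        rw [Ideal.span_le, Set.singleton_subset_iff]
        exact Ideal.mem_span_singleton'.mpr ⟨e, by linear_combination (1 - f) * he.eq⟩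
      have hF : Ideal.span {f} ≤ Ideal.span ({e + f - e * f} : Set R) := by
        rw [Ideal.span_le, Set.singleton_subset_iff]
        exact Ideal.mem_span_singleton'.mpr ⟨f, by linear_combination (1 - e) * hf.eq⟩
      refine ⟨e + f - e * f, hgidem, hgp, ?_⟩
      intro x hx
      rcases Finset.mem_insert.mp hx with rfl | hx
      · exact hF hyf
      · exact hE (hxe x hx)

lemma exists_idem_span_family {κ : Type*} [Fintype κ] (p : Ideal R) (v : κ → R)
    (hv : ∀ i, v i ∈ pierceIdeal p) :
    ∃ e, IsIdempotentElem e ∧ e ∈ p ∧ ∀ i, v i ∈ Ideal.span {e} := by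
  classical
  obtain ⟨e, h1, h2, h3⟩ := exists_idem_span_finset p (Finset.univ.image v)
    (by simp only [Finset.mem_image]; rintro x ⟨i, -, rfl⟩; exact hv i)
  exact ⟨e, h1, h2, fun i => h3 _ (Finset.mem_image_of_mem v (Finset.mem_univ i))⟩

lemma telescope (F : ℕ → R) (m : ℕ) :
    ∑ j ∈ Finset.range m, F j * ∏ i ∈ Finset.range j, (1 - F i)
      = 1 - ∏ i ∈ Finset.range m, (1 - F i) := by
  induction m with
  | zero => simp
  | succ m ih =>
      rw [Finset.sum_range_succ, Finset.prod_range_succ, ih]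
      ring

lemma prod_one_sub_idem (F : ℕ → R) (hF : ∀ i, IsIdempotentElem (F i)) (s : Finset ℕ) :
    IsIdempotentElem (∏ i ∈ s, (1 - F i)) := by
  classical
  induction s using Finset.induction with
  | empty => simpa using IsIdempotentElem.one
  | @insert y t hy ih =>
      rw [Finset.prod_insert hy]
      exact ((hF y).one_sub).mul_of_commute (Commute.all _ _) ih

end Pierce

/-- All Pierce stalks of a commutative ring `R` are projective free iff for every finitely
generated projective `R`-module `P` there is a complete orthogonal set of idempotents
`e₁, …, e_k` such that each `P/(1-eᵢ)P` is free over `R/(1-eᵢ)`. -/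
theorem pierceStalks_projectiveFree_iff {R : Type u} [CommRing R] :
    (∀ p : Ideal R, p.IsPrime → IsProjectiveFree (R ⧸ pierceIdeal p)) ↔
      ∀ (P : Type u) [AddCommGroup P] [Module R P], Module.Finite R P → Module.Projective R P →
        ∃ (k : ℕ) (e : Fin k → R), IsCompleteOrthogonalIdempotents e ∧
          ∀ i, Module.Free (R ⧸ Ideal.span {1 - e i})
            (P ⧸ ((Ideal.span {1 - e i}) • ⊤ : Submodule R P)) := by
  classical
  constructor
  · intro H P _ _ hfin hproj
    haveI := hfin; haveI := hproj
    obtain ⟨n, ρ, ι, hρsurj, hιinj, hρι⟩ := Module.Finite.exists_comp_eq_id_of_projective R P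
    set A : Matrix (Fin n) (Fin n) R := LinearMap.toMatrix' (ι ∘ₗ ρ) with hAdef
    have hA : ι ∘ₗ ρ = Matrix.toLin' A := (Matrix.toLin'_toMatrix' _).symm
    -- per-prime extraction of an idempotent
    have key : ∀ q : {p : Ideal R // p.IsPrime}, ∃ e : R, IsIdempotentElem e ∧ e ∈ q.1 ∧
        Module.Free (R ⧸ Ideal.span {e}) ((R ⧸ Ideal.span {e}) ⊗[R] P) := by
      rintro ⟨p, hp⟩
      have hfreeS : Module.Free (R ⧸ pierceIdeal p) ((R ⧸ pierceIdeal p) ⊗[R] P) := by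
        refine H p hp _ inferInstance ?_
        refine Module.Projective.of_split (ι.baseChange _) (ρ.baseChange _) ?_
        rw [← LinearMap.baseChange_comp, hρι, LinearMap.baseChange_id]
      obtain ⟨a, U, V, hVU, hUV⟩ := matrixPair_of_free ι ρ hρι A hA hfreeS
      set mkI := Ideal.Quotient.mk (pierceIdeal p) with hmkI
      have hU0 : ∀ i j, ∃ x : R, mkI x = U i j := fun i j => Ideal.Quotient.mk_surjective _
      have hV0 : ∀ i j, ∃ x : R, mkI x = V i j := fun i j => Ideal.Quotient.mk_surjective _
      set U₀ : Matrix (Fin n) (Fin a) R := Matrix.of fun i j => (hU0 i j).choose with hU₀def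
      set V₀ : Matrix (Fin a) (Fin n) R := Matrix.of fun i j => (hV0 i j).choose with hV₀def
      have hU₀ : U₀.map mkI = U := by ext i j; exact (hU0 i j).choose_spec
      have hV₀ : V₀.map mkI = V := by ext i j; exact (hV0 i j).choose_spec
      -- the finitely many defect elements
      set w : (Fin a × Fin a) ⊕ (Fin n × Fin n) → R :=
        Sum.elim (fun ij => (V₀ * U₀ - (1 : Matrix (Fin a) (Fin a) R)) ij.1 ij.2)
          (fun ij => (U₀ * V₀ - A) ij.1 ij.2) with hw
      have hwmem : ∀ x, w x ∈ pierceIdeal p := by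
        rintro (⟨i, j⟩ | ⟨i, j⟩) <;> rw [← Ideal.Quotient.eq_zero_iff_mem, ← hmkI]
        · have h0 : (V₀ * U₀ - 1).map mkI = 0 := by
            rw [Matrix.map_sub _ (map_sub mkI), Matrix.map_mul, hU₀, hV₀, hVU,
              Matrix.map_one _ (map_zero _) (map_one _), sub_self]
          have := congrFun (congrFun h0 i) j
          simpa [hw, Matrix.map_apply] using this
        · have h0 : (U₀ * V₀ - A).map mkI = 0 := by
            rw [Matrix.map_sub _ (map_sub mkI), Matrix.map_mul, hU₀, hV₀, hUV,
              Ideal.Quotient.algebraMap_eq, ← hmkI, sub_self]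
          have := congrFun (congrFun h0 i) j
          simpa [hw, Matrix.map_apply] using this
      obtain ⟨e, he, hep, hesp⟩ := exists_idem_span_family p w hwmem
      refine ⟨e, he, hep, ?_⟩
      set mkE := Ideal.Quotient.mk (Ideal.span ({e} : Set R)) with hmkE
      have hmap : ∀ (x y : R), x - y ∈ Ideal.span ({e} : Set R) → mkE x = mkE y := by
        intro x y hxy
        rwa [Ideal.Quotient.mk_eq_mk_iff_sub_mem]
      refine free_of_matrixPair ι ρ hρι A hA (U₀.map mkE) (V₀.map mkE) ?_ ?_
      · rw [← Matrix.map_mul]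
        ext i j
        have := hesp (Sum.inl (i, j))
        simp only [hw, Sum.elim_inl, Matrix.sub_apply] at this
        rw [Matrix.map_apply, hmap _ ((1 : Matrix (Fin a) (Fin a) R) i j) this]
        by_cases hij : i = j <;> simp [hij, Matrix.one_apply]
      · rw [← Matrix.map_mul]
        ext i j
        have := hesp (Sum.inr (i, j))
        simp only [hw, Sum.elim_inr, Matrix.sub_apply] at this
        rw [Matrix.map_apply, hmap _ (A i j) this, Ideal.Quotient.algebraMap_eq, Matrix.map_apply]
    choose E hE1 hE2 hE3 using key
    -- the ideal generated by the complements is the unit ideal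
    have hspan : (Ideal.span (Set.range fun q : {p : Ideal R // p.IsPrime} => 1 - E q)) = ⊤ := by
      by_contra hne
      obtain ⟨m, hmmax, hle⟩ := Ideal.exists_le_maximal _ hne
      have hprime : m.IsPrime := hmmax.isPrime
      have h1 : 1 - E ⟨m, hprime⟩ ∈ m := hle (Ideal.subset_span ⟨⟨m, hprime⟩, rfl⟩)
      have h2 : E ⟨m, hprime⟩ ∈ m := hE2 ⟨m, hprime⟩
      have : (1 : R) ∈ m := by
        have := m.add_mem h1 h2; simpa using this
      exact hmmax.ne_top ((Ideal.eq_top_iff_one m).mpr this)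
    have h1mem : (1 : R) ∈ Ideal.span (Set.range fun q : {p : Ideal R // p.IsPrime} => 1 - E q) :=
      hspan ▸ Submodule.mem_top
    obtain ⟨t, hts, h1t⟩ := Submodule.mem_span_finite_of_mem_span h1mem
    set k := t.card with hk
    set η : Fin k → R := fun j => ((t.equivFin.symm j : t) : R) with hη
    have hηt : ∀ j, η j ∈ t := fun j => (t.equivFin.symm j).2
    have hsurj : ∀ x ∈ t, ∃ j, η j = x := by
      intro x hx
      exact ⟨t.equivFin ⟨x, hx⟩, by simp [hη]⟩
    have hq : ∀ j, ∃ q : {p : Ideal R // p.IsPrime}, 1 - E q = η j := by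
      intro j
      exact hts (hηt j)
    choose q hqq using hq
    set F : ℕ → R := fun i => if h : i < k then η ⟨i, h⟩ else 0 with hF
    have hFν : ∀ j : Fin k, F j.val = η j := by
      intro j; simp [hF]
    have hFidem : ∀ i, IsIdempotentElem (F i) := by
      intro i
      by_cases h : i < k
      · rw [hF]; simp only [h, dif_pos]
        rw [← hqq ⟨i, h⟩]
        exact (hE1 _).one_sub
      · rw [hF]; simp only [h, dif_neg, not_false_iff]; exact IsIdempotentElem.zero
    -- the product of all (1 - F i) vanishes
    have hzero : ∀ x ∈ Submodule.span R (↑t : Set R),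
        x * ∏ i ∈ Finset.range k, (1 - F i) = 0 := by
      intro x hx
      refine Submodule.span_induction ?_ ?_ ?_ ?_ hx
      · intro x hxt
        obtain ⟨j, rfl⟩ := hsurj x hxt
        have hjk : (j : ℕ) ∈ Finset.range k := Finset.mem_range.mpr j.2
        rw [← Finset.mul_prod_erase _ _ hjk, ← mul_assoc]
        have : η j * (1 - F j.val) = 0 := by
          rw [hFν j]
          have := (hFidem j.val).eq
          rw [hFν j] at this
          linear_combination -this
        rw [this, zero_mul]
      · rw [zero_mul]
      · intro x y _ _ hx hy
        rw [add_mul, hx, hy, add_zero]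
      · intro r x _ hx
        rw [smul_eq_mul, mul_assoc, hx, mul_zero]
    have hprod0 : ∏ i ∈ Finset.range k, (1 - F i) = 0 := by
      have := hzero 1 h1t
      simpa using this
    set g : Fin k → R := fun j => F j.val * ∏ i ∈ Finset.range j.val, (1 - F i) with hg
    have hgidem : ∀ j, IsIdempotentElem (g j) := by
      intro j
      exact (hFidem j.val).mul_of_commute (Commute.all _ _) (prod_one_sub_idem F hFidem _)
    have hortho' : ∀ i j : Fin k, (i : ℕ) < (j : ℕ) → g i * g j = 0 := by
      intro i j hij
      have hmem : (i : ℕ) ∈ Finset.range (j : ℕ) := Finset.mem_range.mpr hij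
      have hfac := Finset.mul_prod_erase (Finset.range (j : ℕ)) (fun i => 1 - F i) hmem
      have hFi : F i.val * (1 - F i.val) = 0 := by
        have := (hFidem i.val).eq
        linear_combination -this
      calc g i * g j
          = (F i.val * ∏ l ∈ Finset.range i.val, (1 - F l)) *
            (F j.val * ((1 - F i.val) * ∏ l ∈ (Finset.range j.val).erase i.val, (1 - F l))) := by
            rw [hfac]
        _ = (F i.val * (1 - F i.val)) * ((∏ l ∈ Finset.range i.val, (1 - F l)) * F j.val *
            ∏ l ∈ (Finset.range j.val).erase i.val, (1 - F l)) := by ring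
        _ = 0 := by rw [hFi, zero_mul]
    refine ⟨k, g, ⟨hgidem, ?_, ?_⟩, ?_⟩
    · intro i j hij
      rcases lt_or_gt_of_ne (fun h : (i : ℕ) = (j : ℕ) => hij (Fin.ext h)) with h | h
      · exact hortho' i j h
      · rw [mul_comm]; exact hortho' j i h
    · rw [Fin.sum_univ_eq_sum_range (fun j => F j * ∏ i ∈ Finset.range j, (1 - F i)) k,
        telescope, hprod0, sub_zero]
    · intro j
      -- free over R ⧸ span {1 - F j} = span {E (q j)}, transfer to span {1 - g j}
      have hle : Ideal.span ({1 - F j.val} : Set R) ≤ Ideal.span ({1 - g j} : Set R) := by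
        rw [Ideal.span_le, Set.singleton_subset_iff]
        rw [SetLike.mem_coe, Ideal.mem_span_singleton']
        refine ⟨1 - F j.val, ?_⟩
        rw [hg]
        linear_combination (∏ i ∈ Finset.range j.val, (1 - F i)) * (hFidem j.val).eq
      have hfree1 : Module.Free (R ⧸ Ideal.span ({1 - F j.val} : Set R))
          ((R ⧸ Ideal.span ({1 - F j.val} : Set R)) ⊗[R] P) := by
        have h1F : 1 - F j.val = E (q j) := by
          rw [hFν j, ← hqq j]; ring
        rw [h1F]
        exact hE3 (q j)
      have := free_quot_of_le ι ρ hρι A hA hle hfree1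
      exact (free_tensor_iff_free_quot _).mp this
  · intro H p hp
    intro M _ _ hMfin hMproj
    haveI := hMfin; haveI := hMproj
    set S := R ⧸ pierceIdeal p with hS
    set mkI := Ideal.Quotient.mk (pierceIdeal p) with hmkI
    obtain ⟨n, f, g, hfsurj, hginj, hfg⟩ := Module.Finite.exists_comp_eq_id_of_projective S M
    set AS : Matrix (Fin n) (Fin n) S := LinearMap.toMatrix' (g ∘ₗ f) with hAS
    have hfg' : ∀ x, f (g x) = x := fun x => LinearMap.congr_fun hfg x
    have hASidem : AS * AS = AS := by
      rw [hAS, ← LinearMap.toMatrix'_comp]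
      congr 1
      refine LinearMap.ext fun x => ?_
      simp only [LinearMap.comp_apply]
      rw [hfg' (f x)]
    -- lift AS to an honest idempotent matrix over R
    have hBex : ∀ i j, ∃ x : R, mkI x = AS i j := fun i j => Ideal.Quotient.mk_surjective _
    set B : Matrix (Fin n) (Fin n) R := Matrix.of fun i j => (hBex i j).choose with hBdef
    have hB : B.map mkI = AS := by ext i j; exact (hBex i j).choose_spec
    have hBBmem : ∀ ij : Fin n × Fin n, (B * B - B) ij.1 ij.2 ∈ pierceIdeal p := by
      intro ij
      rw [← Ideal.Quotient.eq_zero_iff_mem]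
      have h0 : (B * B - B).map mkI = 0 := by
        rw [Matrix.map_sub _ (map_sub mkI), Matrix.map_mul, hB, hASidem, sub_self]
      have := congrFun (congrFun h0 ij.1) ij.2
      simpa [Matrix.map_apply, ← hmkI] using this
    obtain ⟨e, he, hep, hesp⟩ := exists_idem_span_family p _ hBBmem
    set C : Matrix (Fin n) (Fin n) R := (1 - e) • B with hCdef
    have hCC : C * C = C := by
      have h1 : C * C = (1 - e) • ((1 - e) • (B * B)) := by
        rw [hCdef, Matrix.smul_mul, Matrix.mul_smul]
      rw [h1, smul_smul, (he.one_sub).eq]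
      have h2 : (1 - e) • (B * B) - (1 - e) • B = (1 - e) • (B * B - B) := by
        rw [smul_sub]
      have h3 : (1 - e) • (B * B - B) = 0 := by
        ext i j
        obtain ⟨r, hr⟩ := Ideal.mem_span_singleton'.mp (hesp (i, j))
        simp only [Matrix.smul_apply, Matrix.zero_apply, smul_eq_mul]
        rw [← hr]
        linear_combination (-r) * he.eq
      have := sub_eq_zero.mp (h2 ▸ h3)
      rw [hCdef, this]
    have hCmk : C.map mkI = AS := by
      ext i j
      have hemk : mkI e = 0 := Ideal.Quotient.eq_zero_iff_mem.mpr (idem_mem_pierce he hep)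
      simp only [hCdef, Matrix.map_apply, Matrix.smul_apply, smul_eq_mul, map_mul, map_sub,
        map_one, hemk, sub_zero, one_mul]
      exact congrFun (congrFun hB i) j
    -- the finitely generated projective R-module N
    set N : Submodule R (Fin n → R) := LinearMap.range (Matrix.toLin' C) with hN
    set ι : ↥N →ₗ[R] (Fin n → R) := N.subtype with hι
    set ρ : (Fin n → R) →ₗ[R] ↥N := (Matrix.toLin' C).rangeRestrict with hρ
    have hιρ : ι ∘ₗ ρ = Matrix.toLin' C := rfl
    have hρι : ρ ∘ₗ ι = LinearMap.id := by
      refine LinearMap.ext fun x => ?_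
      obtain ⟨y, hy⟩ := x.2
      refine Subtype.ext ?_
      simp only [LinearMap.comp_apply, LinearMap.id_apply, hρ, hι, Submodule.coe_subtype]
      show Matrix.toLin' C (x : Fin n → R) = (x : Fin n → R)
      rw [← hy, ← Matrix.toLin'_mul_apply, hCC]
    haveI hNproj : Module.Projective R ↥N := Module.Projective.of_split ι ρ hρι
    obtain ⟨k, eo, ⟨hidem, hortho, hsum⟩, hfree⟩ := H ↥N inferInstance hNproj
    -- find the unique index with eo i ∉ p
    have hex : ∃ i, eo i ∉ p := by
      by_contra hall
      push_neg at hall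
      have : (1 : R) ∈ p := by
        rw [← hsum]; exact Ideal.sum_mem _ fun i _ => hall i
      exact hp.ne_top ((Ideal.eq_top_iff_one p).mpr this)
    obtain ⟨i, hi⟩ := hex
    have h1mem : 1 - eo i ∈ p := by
      have hsum' : ∑ j ∈ Finset.univ.erase i, eo j + eo i = 1 := by
        rw [Finset.sum_erase_add _ _ (Finset.mem_univ i)]; exact hsum
      have : 1 - eo i = ∑ j ∈ Finset.univ.erase i, eo j := by
        rw [← hsum']; ring
      rw [this]
      refine Ideal.sum_mem _ fun j hj => ?_
      have hji : j ≠ i := (Finset.mem_erase.mp hj).1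
      have h0 : eo i * eo j = 0 := hortho i j (fun h => hji h.symm)
      rcases hp.mem_or_mem (h0 ▸ p.zero_mem) with h | h
      · exact absurd h hi
      · exact h
    have hle : Ideal.span ({1 - eo i} : Set R) ≤ pierceIdeal p := by
      rw [Ideal.span_le, Set.singleton_subset_iff]
      exact idem_mem_pierce ((hidem i).one_sub) h1mem
    -- transfer freeness to the Pierce stalk
    have hfree1 : Module.Free (R ⧸ Ideal.span ({1 - eo i} : Set R))
        ((R ⧸ Ideal.span ({1 - eo i} : Set R)) ⊗[R] ↥N) :=
      (free_tensor_iff_free_quot _).mpr (hfree i)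
    have hfreeS : Module.Free (R ⧸ pierceIdeal p) ((R ⧸ pierceIdeal p) ⊗[R] ↥N) :=
      free_quot_of_le ι ρ hρι C hιρ hle hfree1
    -- finally, M is isomorphic to S ⊗ N
    set εn := TensorProduct.piScalarRight R S S (Fin n) with hεn
    have hCalg : C.map (algebraMap R S) = AS := by
      rw [Ideal.Quotient.algebraMap_eq]; exact hCmk
    set φ : M →ₗ[S] (S ⊗[R] ↥N) := (ρ.baseChange S) ∘ₗ εn.symm.toLinearMap ∘ₗ g with hφ
    set ψ : (S ⊗[R] ↥N) →ₗ[S] M := f ∘ₗ εn.toLinearMap ∘ₗ (ι.baseChange S) with hψ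
    have hρι' : ∀ z : S ⊗[R] ↥N, (ρ.baseChange S) ((ι.baseChange S) z) = z := by
      intro z
      rw [← LinearMap.comp_apply, ← LinearMap.baseChange_comp, hρι, LinearMap.baseChange_id,
        LinearMap.id_apply]
    have hkey : ∀ y : Fin n → S, εn ((ι.baseChange S) ((ρ.baseChange S) (εn.symm y)))
        = Matrix.toLin' AS y := by
      intro y
      rw [key_identity ι ρ C hιρ, hCalg]
    have hgf : ∀ y : Fin n → S, Matrix.toLin' AS y = g (f y) := by
      intro y
      rw [hAS, Matrix.toLin'_toMatrix']; rfl
    have hψφ : ψ ∘ₗ φ = LinearMap.id := by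
      refine LinearMap.ext fun x => ?_
      simp only [hφ, hψ, LinearMap.comp_apply, LinearEquiv.coe_coe, LinearMap.id_apply]
      rw [hkey (g x), hgf (g x), hfg' x, hfg' x]
    have hφψ : φ ∘ₗ ψ = LinearMap.id := by
      refine LinearMap.ext fun z => ?_
      simp only [hφ, hψ, LinearMap.comp_apply, LinearEquiv.coe_coe, LinearMap.id_apply]
      rw [← hgf (εn ((ι.baseChange S) z)), ← hkey (εn ((ι.baseChange S) z)),
        LinearEquiv.symm_apply_apply, hρι', LinearEquiv.symm_apply_apply, hρι']
    exact Module.Free.of_equiv' hfreeS (LinearEquiv.ofLinear ψ φ hψφ hφψ)
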